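/- For QLTL formulas whose prefix contains no universal quantifier followed by an existential quantifier — specifically formulas in the fragments Π₀ (all-universal prefix), Σ₀ (all-existential prefix), and Σ₁ (prefix of form ∃Y ∀X) — behavioral satisfaction and Skolem (hence classic) satisfaction coincide: π ⊨_B φ iff π ⊨_S φ, for every interpretation π of the free variables, provided the formula also has no free variables contributing dependencies (F = ∅ for the Σ cases). -/

import Mathlib

/-- LTL formulas over a set of propositional variables. -/
inductive LTL (V : Type) where
  | var (v : V)
  | not (φ : LTL V)
  | or (φ ψ : LTL V)
  | and (φ ψ : LTL V)
  | next (φ : LTL V)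
  | untl (φ ψ : LTL V)

/-- Variables occurring in an LTL formula. -/
def varsLTL {V : Type} : LTL V → Set V
  | .var v => {v}
  | .not φ => varsLTL φ
  | .or φ ψ => varsLTL φ ∪ varsLTL ψ
  | .and φ ψ => varsLTL φ ∪ varsLTL ψ
  | .next φ => varsLTL φ
  | .untl φ ψ => varsLTL φ ∪ varsLTL ψ

/-- Classic LTL satisfaction `π, i ⊨ φ`. -/
def ltlSat {V : Type} (π : ℕ → Set V) : ℕ → LTL V → Prop
  | i, .var v => v ∈ π i
  | i, .not φ => ¬ ltlSat π i φ
  | i, .or φ ψ => ltlSat π i φ ∨ ltlSat π i ψ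
  | i, .and φ ψ => ltlSat π i φ ∧ ltlSat π i ψ
  | i, .next φ => ltlSat π (i + 1) φ
  | i, .untl φ ψ => ∃ j, i ≤ j ∧ ltlSat π j ψ ∧ ∀ k, i ≤ k → k < j → ltlSat π k φ

/-- A quantifier prefix: a list of (quantifier, variable), `true` = ∃, `false` = ∀. -/
abbrev QPrefix (V : Type) := List (Bool × V)

/-- Classic semantics of a prenex QLTL formula `℘ ψ` over interpretation `π`. -/
def satC {V : Type} : QPrefix V → LTL V → (ℕ → Set V) → Prop
  | [], ψ, π => ltlSat π 0 ψ
  | (true, x) :: p, ψ, π =>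
      ∃ π' : ℕ → Set V, (∀ i, ∀ v, v ≠ x → (v ∈ π' i ↔ v ∈ π i)) ∧ satC p ψ π'
  | (false, x) :: p, ψ, π =>
      ∀ π' : ℕ → Set V, (∀ i, ∀ v, v ≠ x → (v ∈ π' i ↔ v ∈ π i)) → satC p ψ π'

/-- Universally quantified variables of a prefix. -/
def univVars {V : Type} (p : QPrefix V) : Set V := {v | (false, v) ∈ p}

/-- Existentially quantified variables of a prefix. -/
def exVars {V : Type} (p : QPrefix V) : Set V := {v | (true, v) ∈ p}

/-- `dep p y`: the universally quantified variables occurring before `y` in `p`. -/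
def dep {V : Type} [DecidableEq V] : QPrefix V → V → Set V
  | [], _ => ∅
  | (true, x) :: p, y => if x = y then ∅ else dep p y
  | (false, x) :: p, y => if x = y then ∅ else insert x (dep p y)

/-- Combine two interpretations: take `π₁` on `S` and `π₂` elsewhere. -/
def assign {V : Type} (S : Set V) (π₁ π₂ : ℕ → Set V) : ℕ → Set V :=
  fun i => {v | (v ∈ S ∧ v ∈ π₁ i) ∨ (v ∉ S ∧ v ∈ π₂ i)}

/-- Interpretation feeding a Skolem function: universally quantified variables are
taken from `πu`, the others (the free ones) from `π`. -/
def inputOf {V : Type} (p : QPrefix V) (π πu : ℕ → Set V) : ℕ → Set V :=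
  assign (univVars p) πu π

/-- Full interpretation: existential variables from the Skolem function `θ`,
the rest from the input. -/
def fullOf {V : Type} (p : QPrefix V) (θ : (ℕ → Set V) → (ℕ → Set V))
    (π πu : ℕ → Set V) : ℕ → Set V :=
  assign (exVars p) (θ (inputOf p π πu)) (inputOf p π πu)

/-- Skolem function over `(p, F)`: the `y`-component of the output depends only
on the restriction of the input to `Dep^F(y) = F ∪ dep p y`. -/
def IsSkolem {V : Type} [DecidableEq V] (F : Set V) (p : QPrefix V)
    (θ : (ℕ → Set V) → (ℕ → Set V)) : Prop :=
  ∀ π₁ π₂ : ℕ → Set V, ∀ y ∈ exVars p,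
    (∀ i, ∀ v ∈ F ∪ dep p y, (v ∈ π₁ i ↔ v ∈ π₂ i)) →
    ∀ i, (y ∈ θ π₁ i ↔ y ∈ θ π₂ i)

/-- Behavioral condition: the `y`-component at instant `k` depends only on the
prefix up to `k` of the input restricted to `Dep^F(y)`. -/
def IsBehavioral {V : Type} [DecidableEq V] (F : Set V) (p : QPrefix V)
    (θ : (ℕ → Set V) → (ℕ → Set V)) : Prop :=
  ∀ π₁ π₂ : ℕ → Set V, ∀ y ∈ exVars p, ∀ k : ℕ,
    (∀ i ≤ k, ∀ v ∈ F ∪ dep p y, (v ∈ π₁ i ↔ v ∈ π₂ i)) →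
    (y ∈ θ π₁ k ↔ y ∈ θ π₂ k)

/-- Skolem semantics: `π ⊨_S ℘ ψ`. -/
def satS {V : Type} [DecidableEq V] (F : Set V) (p : QPrefix V) (ψ : LTL V)
    (π : ℕ → Set V) : Prop :=
  ∃ θ : (ℕ → Set V) → (ℕ → Set V), IsSkolem F p θ ∧
    ∀ πu : ℕ → Set V, ltlSat (fullOf p θ π πu) 0 ψ

/-- Behavioral semantics: `π ⊨_B ℘ ψ`. -/
def satB {V : Type} [DecidableEq V] (F : Set V) (p : QPrefix V) (ψ : LTL V)
    (π : ℕ → Set V) : Prop :=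
  ∃ θ : (ℕ → Set V) → (ℕ → Set V), IsSkolem F p θ ∧ IsBehavioral F p θ ∧
    ∀ πu : ℕ → Set V, ltlSat (fullOf p θ π πu) 0 ψ


lemma dep_append_empty {V : Type} [DecidableEq V] (y : V) :
    ∀ (p₁ p₂ : QPrefix V), (∀ q ∈ p₁, q.1 = true) → (true, y) ∈ p₁ →
      dep (p₁ ++ p₂) y = ∅
  | [], _, _, hmem => by simp at hmem
  | (b, x) :: t, p₂, hall, hmem => by
      have hb : b = true := hall _ List.mem_cons_self
      subst hb
      by_cases hx : x = y
      · simp [dep, hx]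
      · have hyt : (true, y) ∈ t := by
          rcases List.mem_cons.mp hmem with h | h
          · exact absurd (congrArg Prod.snd h).symm hx
          · exact h
        have := dep_append_empty y t p₂ (fun q hq => hall q (List.mem_cons_of_mem _ hq)) hyt
        simp [dep, hx, this]

/-- for the fragments Π₀ (all-universal prefix), Σ₀ (all-existential)
and Σ₁ (∃-block then ∀-block, with no free variables), behavioral and Skolem
(hence classic) satisfaction coincide. -/
theorem behavioral_iff_skolem_low_fragments {V : Type} [DecidableEq V]
    (p : QPrefix V) (ψ : LTL V) (F : Set V)
    (hnd : (p.map Prod.snd).Nodup)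
    (hfrag : (∀ q ∈ p, q.1 = false) ∨
      (F = ∅ ∧ ∃ p₁ p₂ : QPrefix V, p = p₁ ++ p₂ ∧
        (∀ q ∈ p₁, q.1 = true) ∧ (∀ q ∈ p₂, q.1 = false)))
    (π : ℕ → Set V) :
    satB F p ψ π ↔ satS F p ψ π := by
  constructor
  · rintro ⟨θ, hS, _, h⟩
    exact ⟨θ, hS, h⟩
  · rintro ⟨θ, hS, h⟩
    refine ⟨θ, hS, ?_, h⟩
    intro π₁ π₂ y hy k _
    rcases hfrag with hall | ⟨hF, p₁, p₂, rfl, h1, h2⟩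
    · exact absurd (hall _ hy) (by simp)
    · have hy1 : (true, y) ∈ p₁ := by
        rcases List.mem_append.mp hy with h | h
        · exact h
        · exact absurd (h2 _ h) (by simp)
      have hdep := dep_append_empty y p₁ p₂ h1 hy1
      apply hS π₁ π₂ y hy
      intro i v hv
      rw [hF, hdep] at hv
      simp at hv
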